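/- arXiv:1702.05705 — 2 statements merged into one kernel-verified Lean document; each statement's English description precedes it below -/
import Mathlib

section
/- For every nonzero element v of the field F_8 with v ≠ 1, the trace map tr: F_8 → F_2 (defined by tr(x) = x + x^2 + x^4) satisfies tr(v + v^{-1}) = 1. -/
open scoped Classical
noncomputable section

abbrev F8 := GaloisField 2 3

def tr (x : F8) : F8 := x + x ^ 2 + x ^ 4

theorem trace_of_v_add_inv (v : F8) (hv : v ≠ 0) (hv1 : v ≠ 1) :
    tr (v + v⁻¹) = 1 := by
  haveI : Fact (Nat.Prime 2) := ⟨by norm_num⟩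
  haveI : Fintype F8 := Fintype.ofFinite F8
  have h2 : (2 : F8) = 0 := by
    have := CharP.cast_eq_zero F8 2
    simpa using this
  have hcard : Fintype.card F8 = 8 := by
    have := GaloisField.card 2 3 (by norm_num)
    simpa using this
  have h8 : v ^ 8 = v := by
    have := FiniteField.pow_card v
    rwa [hcard] at this
  have h7 : v ^ 7 = 1 := by
    have h : v ^ 7 * v = 1 * v := by rw [← pow_succ]; simpa using h8
    exact mul_right_cancel₀ hv h
  have hs : v^6 + v^5 + v^4 + v^3 + v^2 + v + 1 = 0 := by
    have hv1' : v - 1 ≠ 0 := sub_ne_zero.mpr hv1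
    have h : (v - 1) * (v^6 + v^5 + v^4 + v^3 + v^2 + v + 1) = (v - 1) * 0 := by
      linear_combination h7
    exact mul_left_cancel₀ hv1' h
  have hinv : v⁻¹ = v ^ 6 := by
    field_simp
    linear_combination -h7
  unfold tr
  rw [hinv]
  linear_combination (v^17 + 4*v^12 + v^10 + 6*v^7 + 5*v^5 + v^3 + 4*v^2 + 8) * h7 + hs + (2*v^5 + 2*v^2 + 3) * h2
end
end

section
/- Define φ: F_8 × F_8 → F_2 by φ(x,y) = tr(y·x^6). Then for all x, y ∈ F_8, φ(x,y) + φ(y,x) = 1 if x and y are F_2-linearly independent (i.e., x ≠ 0, y ≠ 0, and x ≠ y), and φ(x,y) + φ(y,x) = 0 otherwise. -/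
open scoped Classical
noncomputable section

noncomputable instance : Fintype F8 := Fintype.ofFinite F8

def φ (x y : F8) : F8 := tr (y * x ^ 6)

lemma F8_card : Fintype.card F8 = 8 := by
  have := GaloisField.card 2 3 (by norm_num)
  simpa using this

lemma pow7 (x : F8) (hx : x ≠ 0) : x ^ 7 = 1 := by
  have := FiniteField.pow_card_sub_one_eq_one x hx
  rwa [F8_card] at this

lemma two_eq_zero : (2 : F8) = 0 := by
  have := CharP.cast_eq_zero F8 2
  exact_mod_cast this

theorem phi_add_phi_swap (x y : F8) :
    φ x y + φ y x = if x ≠ 0 ∧ y ≠ 0 ∧ x ≠ y then 1 else 0 := by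
  have h2 := two_eq_zero
  by_cases hx : x = 0
  · subst hx; simp [φ, tr]
  by_cases hy : y = 0
  · subst hy; simp [φ, tr]
  by_cases hxy : x = y
  · subst hxy
    rw [if_neg (by simp), CharTwo.add_self_eq_zero]
  · simp only [ne_eq, hx, hy, hxy, not_false_eq_true, and_self, if_true]
    have h7x := pow7 x hx
    have h7y := pow7 y hy
    have hne : x + y ≠ 0 := by
      have h := sub_ne_zero.mpr hxy
      rwa [CharTwo.sub_eq_add] at h
    have key : (x + y) * ((φ x y + φ y x) - 1) = 0 := by
      unfold φ tr
      linear_combination (y + x^6*y^2 + x^18*y^4 + x^5*y^3 + x^17*y^5 + x^11*y^4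
          + x^10*y^5 + x^4*y^4 + x^3*y^5) * h7x
        + (x^3*y^5 + x^5*y^17 + x + x^2*y^6 + x^4*y^18 + x^5*y^10 + x^4*y^11
          + x^5*y^3 + x^4*y^4) * h7y
        + (x^2*y^6 + x^6*y^2 + x^5*y^3 + x^4*y^4 + x^3*y^5) * h2
    have := mul_eq_zero.mp key
    rcases this with h | h
    · exact absurd h hne
    · exact sub_eq_zero.mp h
end
end
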